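/- Fix integers n ≥ 2 and r−1 ≥ 1. Let λ ∈ ℤ^n be dominant, i.e. λ_1 ≥ λ_2 ≥ … ≥ λ_n ≥ 0, with λ_i − λ_{i+1} ≥ 2(r−1) for all 1 ≤ i ≤ n−1. Suppose μ ∈ ℤ^n satisfies σ(μ)_i = σ(λ)_i for all i and there exist integers m_1, …, m_n with μ_i = λ_i + (r−1)m_i and ρ(μ)_i = ρ(λ)_i + m_i for all 1 ≤ i ≤ n. Then μ = λ. -/

import Mathlib

open scoped Classical

namespace CCnDAHA

variable {n : ℕ}




/-- σ(λ)_i = +1 if λ_i ≥ 0, −1 otherwise. -/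
def sgn (lam : Fin n → ℤ) (i : Fin n) : ℤ := if 0 ≤ lam i then 1 else -1

/-- `Prec lam i j` : index `i` strictly precedes `j` in the ordering i_1,…,i_n. -/
def Prec (lam : Fin n → ℤ) (i j : Fin n) : Prop :=
  |lam j| < |lam i| ∨
    (|lam i| = |lam j| ∧
      ((0 ≤ lam i ∧ lam j < 0) ∨
       (0 ≤ lam i ∧ 0 ≤ lam j ∧ i < j) ∨
       (lam i < 0 ∧ lam j < 0 ∧ j < i)))

/-- 0-based position of index `i` in the ordering i_1,…,i_n (position m−1). -/
noncomputable def posOf (lam : Fin n → ℤ) (i : Fin n) : ℕ :=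
  (Finset.univ.filter (fun j => Prec lam j i)).card

/-- ρ(λ)_i = σ(λ)_i · (n − m) where i = i_m. -/
noncomputable def rho (lam : Fin n → ℤ) (i : Fin n) : ℤ :=
  sgn lam i * ((n : ℤ) - 1 - (posOf lam i : ℤ))

/-- (a,b)-neighborhood. -/
noncomputable def IsNbhd (a b : ℤ) (lam : Fin n → ℤ) (i j : Fin n) : Prop :=
  |rho lam i| - |rho lam j| = a - 1 ∧
  |lam i| - |lam j| ≤ b ∧
  (|lam i| - |lam j| = b →
    ((0 ≤ lam i ∧ 0 ≤ lam j ∧ j < i) ∨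
     (lam i < 0 ∧ lam j < 0 ∧ i < j) ∨
     (lam i < 0 ∧ 0 ≤ lam j)))

/-- (a,b)-admissible: no (a,b)-neighborhood. -/
noncomputable def Admissible (a b : ℤ) (lam : Fin n → ℤ) : Prop :=
  ∀ i j, ¬ IsNbhd a b lam i j

/-- number of (a,b)-neighborhoods. -/
noncomputable def nbhdCount (a b : ℤ) (lam : Fin n → ℤ) : ℕ :=
  ((Finset.univ : Finset (Fin n × Fin n)).filter (fun p => IsNbhd a b lam p.1 p.2)).card

/-- dot action of the affine simple reflection s_i (0 ≤ i ≤ n, 1-based paper indexing). -/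
noncomputable def dotAct (i : ℕ) (lam : Fin n → ℤ) : Fin n → ℤ := fun j =>
  if i = 0 then (if (j : ℕ) = 0 then -1 - lam j else lam j)
  else if i = n then (if (j : ℕ) + 1 = n then -lam j else lam j)
  else if h1 : (j : ℕ) + 1 = i ∧ i < n then lam ⟨(j : ℕ) + 1, by omega⟩
  else if h2 : (j : ℕ) = i then lam ⟨(j : ℕ) - 1, by have := j.isLt; omega⟩
  else lam j

/-- pairing ⟨λ, α_i⟩, for 0 ≤ i ≤ n. -/
noncomputable def pairing (i : ℕ) (lam : Fin n → ℤ) : ℤ :=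
  if hn : n = 0 then 0
  else if i = 0 then -2 * lam ⟨0, by omega⟩
  else if i = n then 2 * lam ⟨n - 1, by omega⟩
  else lam ⟨(i - 1) % n, Nat.mod_lt _ (by omega)⟩ - lam ⟨i % n, Nat.mod_lt _ (by omega)⟩

/-- partial sum λ_1 + ⋯ + λ_j. -/
def psum (lam : Fin n → ℤ) (j : Fin n) : ℤ :=
  ∑ i ∈ Finset.univ.filter (fun i => i ≤ j), lam i

/-- dominance order: μ ≤ λ. -/
def DomLE (mu lam : Fin n → ℤ) : Prop := ∀ j, psum mu j ≤ psum lam j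

/-- λ⁺ : the weakly decreasing rearrangement of (|λ_1|,…,|λ_n|). -/
noncomputable def lamPlus (lam : Fin n → ℤ) : Fin n → ℤ := fun j =>
  ((Multiset.sort (Multiset.map (fun i => |lam i|) Finset.univ.val) (· ≤ ·)).reverse).getD (j : ℕ) 0

/-- λ ≻ μ. -/
noncomputable def SuccOrd (lam mu : Fin n → ℤ) : Prop :=
  (DomLE (lamPlus mu) (lamPlus lam) ∧ lamPlus lam ≠ lamPlus mu) ∨
  (lamPlus lam = lamPlus mu ∧ DomLE mu lam ∧ lam ≠ mu)

/-- |λ_{i_m}|, with the sentinel value 0 at m = n+1. -/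
noncomputable def absAt (lam : Fin n → ℤ) (m : ℕ) : ℤ :=
  if m = n + 1 then 0
  else ∑ i ∈ Finset.univ.filter (fun i => posOf lam i + 1 = m), |lam i|

/-- σ(λ)_{i_m}, with sentinel value +1 at m = n+1. -/
noncomputable def sgAt (lam : Fin n → ℤ) (m : ℕ) : ℤ :=
  if m = n + 1 then 1
  else ∑ i ∈ Finset.univ.filter (fun i => posOf lam i + 1 = m), sgn lam i

/-- the (1-based) value of the index i_m, with sentinel value n+1 at m = n+1. -/
noncomputable def ixAt (lam : Fin n → ℤ) (m : ℕ) : ℕ :=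
  if m = n + 1 then n + 1
  else ∑ i ∈ Finset.univ.filter (fun i => posOf lam i + 1 = m), ((i : ℕ) + 1)

/-- β_m ∈ {0,1}. -/
noncomputable def betaAt (lam : Fin n → ℤ) (m : ℕ) : ℤ :=
  if (sgAt lam m = 1 ∧ sgAt lam (m + 1) = 1 ∧ ixAt lam (m + 1) < ixAt lam m) ∨
     (sgAt lam m = -1 ∧ sgAt lam (m + 1) = -1 ∧ ixAt lam m < ixAt lam (m + 1)) ∨
     (sgAt lam m = -1 ∧ sgAt lam (m + 1) = 1)
  then 1 else 0

/-- p_m = ⌊(|λ_{i_m}| − |λ_{i_{m+1}}| − β_m)/b⌋ (b plays the role of r−1). -/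
noncomputable def pAt (b : ℤ) (lam : Fin n → ℤ) (m : ℕ) : ℤ :=
  Int.fdiv (absAt lam m - absAt lam (m + 1) - betaAt lam m) b

/-- the b-quotient λ^{quot} (b plays the role of r−1): j-th entry is p_j + ⋯ + p_n
(1-based j = (j:Fin n) + 1). -/
noncomputable def quotOf (b : ℤ) (lam : Fin n → ℤ) : Fin n → ℤ := fun j =>
  ∑ m ∈ Finset.Icc ((j : ℕ) + 1) n, pAt b lam m

/-- fundamental weight ϖ_j (1-based j = (j : Fin n)+1): first j entries 1, rest 0. -/
def varpi (j : Fin n) : Fin n → ℤ := fun i => if i ≤ j then 1 else 0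



private lemma prec_irrefl (lam : Fin n → ℤ) (i : Fin n) : ¬ Prec lam i i := by
  intro h
  unfold Prec at h
  rcases h with h | ⟨_, (⟨h1, h2⟩ | ⟨_, _, h⟩ | ⟨_, _, h⟩)⟩
  · exact lt_irrefl _ h
  · omega
  · exact lt_irrefl _ h
  · exact lt_irrefl _ h

private lemma prec_iff (mu : Fin n → ℤ) (hpos : ∀ i, 0 ≤ mu i) (i j : Fin n) :
    Prec mu i j ↔ (mu j < mu i ∨ (mu i = mu j ∧ i < j)) := by
  unfold Prec
  rw [abs_of_nonneg (hpos i), abs_of_nonneg (hpos j)]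
  constructor
  · rintro (h | ⟨he, (⟨_, h2⟩ | ⟨_, _, h⟩ | ⟨h1, _⟩)⟩)
    · exact Or.inl h
    · exact absurd h2 (not_lt.2 (hpos j))
    · exact Or.inr ⟨he, h⟩
    · exact absurd h1 (not_lt.2 (hpos i))
  · rintro (h | ⟨he, h⟩)
    · exact Or.inl h
    · exact Or.inr ⟨he, Or.inr (Or.inl ⟨hpos i, hpos j, h⟩)⟩

private lemma prec_trans (mu : Fin n → ℤ) (hpos : ∀ i, 0 ≤ mu i) (i j k : Fin n)
    (h1 : Prec mu i j) (h2 : Prec mu j k) : Prec mu i k := by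
  rw [prec_iff mu hpos] at h1 h2 ⊢
  rcases h1 with h1 | ⟨e1, l1⟩ <;> rcases h2 with h2 | ⟨e2, l2⟩
  · exact Or.inl (by omega)
  · exact Or.inl (by omega)
  · exact Or.inl (by omega)
  · exact Or.inr ⟨e1.trans e2, l1.trans l2⟩

private lemma prec_total (mu : Fin n → ℤ) (hpos : ∀ i, 0 ≤ mu i) (i j : Fin n)
    (hne : i ≠ j) : Prec mu i j ∨ Prec mu j i := by
  rw [prec_iff mu hpos, prec_iff mu hpos]
  rcases lt_trichotomy (mu i) (mu j) with h | h | h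
  · exact Or.inr (Or.inl h)
  · rcases hne.lt_or_gt with hij | hij
    · exact Or.inl (Or.inr ⟨h, hij⟩)
    · exact Or.inr (Or.inr ⟨h.symm, hij⟩)
  · exact Or.inl (Or.inl h)

private lemma auxMono {f : Fin n → Fin n}
    (h : ∀ a b : Fin n, (b : ℕ) = (a : ℕ) + 1 → f a < f b) : StrictMono f := by
  have key : ∀ k : ℕ, ∀ a b : Fin n, (b : ℕ) = (a : ℕ) + (k + 1) → f a < f b := by
    intro k
    induction k with
    | zero => exact fun a b hb => h a b hb
    | succ k ih =>
      intro a b hb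
      have hbn := b.isLt
      have h1 := ih a ⟨(a : ℕ) + (k + 1), by omega⟩ rfl
      have h2 := h ⟨(a : ℕ) + (k + 1), by omega⟩ b
        (show (b : ℕ) = (a : ℕ) + (k + 1) + 1 by omega)
      exact lt_trans h1 h2
  intro a b hab
  have hab' : (a : ℕ) < (b : ℕ) := hab
  exact key ((b : ℕ) - (a : ℕ) - 1) a b (by omega)

/-- a dominant λ with gaps λ_i − λ_{i+1} ≥ 2(r−1) has a non-degenerate
eigenvalue under t·q^{r−1} = 1: if σ(μ) = σ(λ), μ = λ + (r−1)m and ρ(μ) = ρ(λ) + m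
componentwise for an integer vector m, then μ = λ. -/
theorem stmt11 (n : ℕ) (hn : 2 ≤ n) (r : ℤ) (hr : 1 ≤ r - 1)
    (lam : Fin n → ℤ)
    (hdom : ∀ i j : Fin n, i ≤ j → lam j ≤ lam i)
    (hpos : ∀ i, 0 ≤ lam i)
    (hgap : ∀ i j : Fin n, (j : ℕ) = (i : ℕ) + 1 → 2 * (r - 1) ≤ lam i - lam j)
    (mu : Fin n → ℤ)
    (hsg : ∀ i, sgn mu i = sgn lam i)
    (m : Fin n → ℤ)
    (heq : ∀ i, mu i = lam i + (r - 1) * m i)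
    (hrho : ∀ i, rho mu i = rho lam i + m i) :
    mu = lam := by
  -- μ is entrywise nonnegative
  have hposmu : ∀ i, 0 ≤ mu i := by
    intro i
    by_contra hneg
    push_neg at hneg
    have h := hsg i
    simp only [sgn, hpos i, if_true, if_neg (not_le.2 hneg)] at h
    norm_num at h
  -- λ is strictly decreasing
  have hlt : ∀ i j : Fin n, i < j → lam j < lam i := by
    intro i j hij
    have hij' : (i : ℕ) + 1 ≤ (j : ℕ) := hij
    have hjn := j.isLt
    have h1 := hgap i ⟨(i : ℕ) + 1, by omega⟩ rfl
    have h2 := hdom ⟨(i : ℕ) + 1, by omega⟩ j (show (i : ℕ) + 1 ≤ (j : ℕ) from hij')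
    linarith
  -- chained gap bound
  have hchain : ∀ k : ℕ, ∀ i j : Fin n, (j : ℕ) = (i : ℕ) + k →
      2 * (r - 1) * (k : ℤ) ≤ lam i - lam j := by
    intro k
    induction k with
    | zero =>
      intro i j hj
      have : i = j := Fin.ext (by omega)
      subst this; simp
    | succ k ih =>
      intro i j hj
      have hjn := j.isLt
      have h1 := ih i ⟨(i : ℕ) + k, by omega⟩ rfl
      have h2 := hgap ⟨(i : ℕ) + k, by omega⟩ j (show (j : ℕ) = (i : ℕ) + k + 1 by omega)
      push_cast
      push_cast at h1
      linarith
  -- posOf for λ is the identity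
  have hpl : ∀ i : Fin n, posOf lam i = (i : ℕ) := by
    intro i
    unfold posOf
    have hset : Finset.univ.filter (fun j => Prec lam j i) = Finset.Iio i := by
      ext j
      simp only [Finset.mem_filter, Finset.mem_univ, true_and, Finset.mem_Iio]
      rw [prec_iff lam hpos]
      constructor
      · rintro (h | ⟨_, hl⟩)
        · rcases lt_trichotomy j i with h' | h' | h'
          · exact h'
          · subst h'; exact absurd h (lt_irrefl _)
          · exact absurd (hlt i j h') (not_lt.2 h.le)
        · exact hl
      · intro h
        exact Or.inl (hlt j i h)
    rw [hset, Fin.card_Iio]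
  -- posOf of μ is strictly compatible with Prec
  have hmono : ∀ i j : Fin n, Prec mu i j → posOf mu i < posOf mu j := by
    intro i j hij
    have hsub : (Finset.univ.filter (fun k => Prec mu k i)) ⊆
        (Finset.univ.filter (fun k => Prec mu k j)) := by
      intro k hk
      simp only [Finset.mem_filter, Finset.mem_univ, true_and] at hk ⊢
      exact prec_trans mu hposmu k i j hk hij
    refine Finset.card_lt_card ((Finset.ssubset_iff_of_subset hsub).2 ⟨i, ?_, ?_⟩)
    · simp only [Finset.mem_filter, Finset.mem_univ, true_and]; exact hij
    · simp only [Finset.mem_filter, Finset.mem_univ, true_and]; exact prec_irrefl mu i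
  -- posOf μ lands in Fin n
  have hposlt : ∀ i : Fin n, posOf mu i < n := by
    intro i
    have hsub : Finset.univ.filter (fun k => Prec mu k i) ⊆ Finset.univ.erase i := by
      intro k hk
      simp only [Finset.mem_filter, Finset.mem_univ, true_and] at hk
      refine Finset.mem_erase.2 ⟨?_, Finset.mem_univ k⟩
      exact fun hki => prec_irrefl mu i (hki ▸ hk)
    have h1 : posOf mu i ≤ (Finset.univ.erase i).card := Finset.card_le_card hsub
    rw [Finset.card_erase_of_mem (Finset.mem_univ i), Finset.card_univ, Fintype.card_fin] at h1
    omega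
  set P : Fin n → Fin n := fun i => ⟨posOf mu i, hposlt i⟩ with hPdef
  have hPinj : Function.Injective P := by
    intro i j hij
    by_contra hne
    have hval : posOf mu i = posOf mu j := congrArg Fin.val hij
    rcases prec_total mu hposmu i j hne with h | h
    · exact absurd hval (Nat.ne_of_lt (hmono i j h))
    · exact absurd hval.symm (Nat.ne_of_lt (hmono j i h))
  have hPbij : Function.Bijective P := Finite.injective_iff_bijective.mp hPinj
  let e : Fin n ≃ Fin n := Equiv.ofBijective P hPbij
  -- the vector m in terms of positions
  have hsgl : ∀ i, sgn lam i = 1 := fun i => by simp [sgn, hpos i]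
  have hsgm : ∀ i, sgn mu i = 1 := fun i => (hsg i).trans (hsgl i)
  have hm : ∀ i : Fin n, m i = ((i : ℕ) : ℤ) - (posOf mu i : ℤ) := by
    intro i
    have h := hrho i
    unfold rho at h
    rw [hsgl i, hsgm i, hpl i] at h
    linarith
  -- key inversion inequality
  have hinv : ∀ i j : Fin n, i < j → posOf mu j < posOf mu i →
      (posOf mu j : ℤ) + ((j : ℕ) : ℤ) < (posOf mu i : ℤ) + ((i : ℕ) : ℤ) := by
    intro i j hij hp
    have hvlt : (i : ℕ) < (j : ℕ) := hij
    have hprec : Prec mu j i := by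
      rcases prec_total mu hposmu i j (ne_of_lt hij) with h | h
      · exact absurd (hmono i j h) (by omega)
      · exact h
    rw [prec_iff mu hposmu] at hprec
    have hmuij : mu i < mu j := by
      rcases hprec with h | ⟨_, hl⟩
      · exact h
      · exact absurd hl (not_lt.2 hij.le)
    have hch := hchain ((j : ℕ) - (i : ℕ)) i j (by omega)
    have hc : ((((j : ℕ) - (i : ℕ) : ℕ)) : ℤ) = ((j : ℕ) : ℤ) - ((i : ℕ) : ℤ) := by omega
    rw [hc] at hch
    have h1 : 0 < mu j - mu i := by linarith
    rw [heq i, heq j] at h1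
    have hD : (r - 1) * (2 * (((j : ℕ) : ℤ) - ((i : ℕ) : ℤ))) < (r - 1) * (m j - m i) := by
      nlinarith
    have h2 : 2 * (((j : ℕ) : ℤ) - ((i : ℕ) : ℤ)) < m j - m i :=
      lt_of_mul_lt_mul_left hD (by linarith)
    rw [hm i, hm j] at h2
    omega
  -- e.symm is strictly monotone on consecutive values
  have hcons : ∀ a b : Fin n, (b : ℕ) = (a : ℕ) + 1 → e.symm a < e.symm b := by
    intro a b hb
    have hPi : P (e.symm a) = a := e.apply_symm_apply a
    have hPj : P (e.symm b) = b := e.apply_symm_apply b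
    have hpi : posOf mu (e.symm a) = (a : ℕ) := congrArg Fin.val hPi
    have hpj : posOf mu (e.symm b) = (b : ℕ) := congrArg Fin.val hPj
    rcases lt_trichotomy (e.symm a) (e.symm b) with h | h | h
    · exact h
    · exfalso; rw [h, hpj] at hpi; omega
    · exfalso
      have hji : ((e.symm b) : ℕ) < ((e.symm a) : ℕ) := h
      have := hinv (e.symm b) (e.symm a) h (by omega)
      rw [hpi, hpj] at this
      omega
  have hgm : StrictMono (⇑e.symm) := auxMono hcons
  have hid : ⇑e.symm = id := by
    refine (hgm.range_inj strictMono_id).1 ?_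
    rw [Set.range_id, e.symm.surjective.range_eq]
  have hpid : ∀ i : Fin n, posOf mu i = (i : ℕ) := by
    intro i
    have h1 : e.symm (P i) = i := e.symm_apply_apply i
    rw [hid] at h1
    exact congrArg Fin.val h1
  funext i
  have hmi := hm i
  rw [hpid i] at hmi
  rw [heq i, hmi]
  ring

end CCnDAHA
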